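/- Let X be a dendroid. If there exists a countable set Q ⊂ X which intersects every arc in X, then X \ E(X) is a countable union of arcs, where E(X) is the endpoint set of X. -/

import Mathlib

open Set Filter Topology

/-- The Euclidean plane. -/
abbrev Plane := EuclideanSpace ℝ (Fin 2)

section Defs

variable {α : Type*} [TopologicalSpace α]

/-- `A` is an arc with endpoints `a` and `b`: a homeomorphic image of `[0,1]`
sending `0 ↦ a` and `1 ↦ b`. -/
def IsArcWithEndpoints (A : Set α) (a b : α) : Prop :=
  ∃ f : ℝ → α, ContinuousOn f (Set.Icc 0 1) ∧ Set.InjOn f (Set.Icc 0 1) ∧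
    f '' (Set.Icc 0 1) = A ∧ f 0 = a ∧ f 1 = b

/-- `A` is an arc. -/
def IsArc (A : Set α) : Prop := ∃ a b, IsArcWithEndpoints A a b

/-- Every two distinct points of `X` are joined by an arc inside `X`. -/
def ArcwiseConnected (X : Set α) : Prop :=
  ∀ x ∈ X, ∀ y ∈ X, x ≠ y → ∃ A, A ⊆ X ∧ IsArcWithEndpoints A x y

/-- Every two subcontinua of `X` have connected intersection. -/
def HereditarilyUnicoherent (X : Set α) : Prop :=
  ∀ K L : Set α, K ⊆ X → L ⊆ X → IsCompact K → IsConnected K →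
    IsCompact L → IsConnected L → IsPreconnected (K ∩ L)

/-- A dendroid: a hereditarily unicoherent, arcwise connected continuum. -/
def IsDendroid (X : Set α) : Prop :=
  IsCompact X ∧ IsConnected X ∧ HereditarilyUnicoherent X ∧ ArcwiseConnected X

/-- The set of endpoints of `X`: points that are endpoints of every arc in `X`
containing them. -/
def Endpoints (X : Set α) : Set α :=
  {e | e ∈ X ∧ ∀ A : Set α, A ⊆ X → IsArc A → e ∈ A → ∃ b, IsArcWithEndpoints A e b}

/-- `X` is Suslinian: every collection of pairwise-disjoint non-degenerate
subcontinua of `X` is countable. -/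
def IsSuslinian (X : Set α) : Prop :=
  ∀ S : Set (Set α), (∀ K ∈ S, K ⊆ X ∧ IsCompact K ∧ IsConnected K ∧ K.Nontrivial) →
    S.PairwiseDisjoint id → S.Countable

/-- The arc component of `x` inside the set `S`. -/
def arcComponentIn (S : Set α) (x : α) : Set α :=
  {y | y ∈ S ∧ (y = x ∨ ∃ A, A ⊆ S ∧ IsArcWithEndpoints A x y)}

/-- The collection of arc components of `X \ {x}`; its cardinality is the order of `x`. -/
def orderComponents (X : Set α) (x : α) : Set (Set α) :=
  {C | ∃ y ∈ X \ {x}, C = arcComponentIn (X \ {x}) y}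

/-- Ramification points of `X`: points of order at least 3. -/
def RamificationPoints (X : Set α) : Set α :=
  {x | x ∈ X ∧ 3 ≤ (orderComponents X x).encard}

/-- `A` is a clopen subset of the subspace `Y`. -/
def IsClopenIn (Y A : Set α) : Prop :=
  A ⊆ Y ∧ (∃ U, IsOpen U ∧ A = Y ∩ U) ∧ (∃ C, IsClosed C ∧ A = Y ∩ C)

/-- The quasicomponent of `x` in the subspace `Y`: the intersection of all
clopen subsets of `Y` containing `x`. -/
def quasicomponentIn (Y : Set α) (x : α) : Set α :=
  {y ∈ Y | ∀ A : Set α, IsClopenIn Y A → x ∈ A → y ∈ A}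

/-- `Y` is hereditarily disconnected: it contains no non-degenerate connected subset. -/
def HereditarilyDisconnected (Y : Set α) : Prop :=
  ∀ S : Set α, S ⊆ Y → IsPreconnected S → S.Subsingleton

end Defs

/-- The point `x` of `X` is (arcwise) accessible from `ℝ² \ X`. -/
def AccessiblePoint (X : Set Plane) (x : Plane) : Prop :=
  ∃ A : Set Plane, IsArc A ∧ A ∩ X = {x}

/-- `σ` separates the points `b` and `d` in the plane: no connected subset of the
complement of `σ` contains both. -/
def SeparatesPoints (σ : Set Plane) (b d : Plane) : Prop :=
  b ∉ σ ∧ d ∉ σ ∧ ∀ K : Set Plane, K ⊆ σᶜ → IsPreconnected K → b ∈ K → d ∉ K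

/-- A simple closed curve in the plane: the image of a period-1 parametrization
injective on `[0,1)`. -/
def IsSimpleClosedCurve (O : Set Plane) : Prop :=
  ∃ f : ℝ → Plane, Continuous f ∧ Function.Periodic f 1 ∧
    Set.InjOn f (Set.Ico 0 1) ∧ f '' (Set.Ico 0 1) = O

/-- The dendroid `X` is smooth at `p`: there is a choice `arcTo x` of the unique arc
from `x` to `p` (reduced to `{p}` for `x = p`) such that `xₙ → x` in `X` implies
`arcTo xₙ → arcTo x` in the Hausdorff distance. -/
def DendroidSmoothAt (X : Set Plane) (p : Plane) : Prop :=
  p ∈ X ∧ ∃ arcTo : Plane → Set Plane,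
    arcTo p = {p} ∧
    (∀ x ∈ X, x ≠ p → arcTo x ⊆ X ∧ IsArcWithEndpoints (arcTo x) x p) ∧
    (∀ (xs : ℕ → Plane) (x : Plane), (∀ n, xs n ∈ X) → x ∈ X →
      Filter.Tendsto xs Filter.atTop (nhds x) →
      Filter.Tendsto (fun n => EMetric.hausdorffEdist (arcTo (xs n)) (arcTo x))
        Filter.atTop (nhds 0))

/-- A space is zero-dimensional if it has a basis of clopen sets. -/
def IsZeroDimensionalSpace (β : Type*) [TopologicalSpace β] : Prop :=
  ∀ (x : β) (U : Set β), IsOpen U → x ∈ U → ∃ V : Set β, IsClopen V ∧ x ∈ V ∧ V ⊆ U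

/-- A space is almost zero-dimensional if it has a neighborhood basis of sets
which are intersections of clopen sets. -/
def IsAlmostZeroDimensionalSpace (β : Type*) [TopologicalSpace β] : Prop :=
  ∀ (x : β) (U : Set β), IsOpen U → x ∈ U →
    ∃ V : Set β, V ∈ nhds x ∧ V ⊆ U ∧
      ∃ 𝒞 : Set (Set β), (∀ C ∈ 𝒞, IsClopen C) ∧ V = ⋂₀ 𝒞

/-- The union of `W` with all of the bounded connected components of its complement. -/
def boundedComplementaryFill (W : Set Plane) : Set Plane :=
  W ∪ ⋃₀ {K | (∃ x ∈ Wᶜ, K = connectedComponentIn Wᶜ x) ∧ Bornology.IsBounded K}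

/-- A Bellamy dendroid: a (non-degenerate) smooth plane dendroid whose endpoint
set is connected. -/
def IsBellamyDendroid (K : Set Plane) : Prop :=
  IsDendroid K ∧ K.Nontrivial ∧ (∃ q, DendroidSmoothAt K q) ∧ IsConnected (Endpoints K)

/-- The middle-thirds Cantor set. -/
noncomputable def cantorC : Set ℝ :=
  {x | ∃ a : ℕ → Bool, x = ∑' i, (if a i then (2 : ℝ) else 0) / 3 ^ (i + 1)}

section AuxLemmas

variable {α : Type*} [TopologicalSpace α] [T2Space α]

/-- Separation lemma: a preconnected subset of an arc containing both endpoints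
cannot avoid an interior point. -/
lemma arc_sep {f : ℝ → α} (hf : ContinuousOn f (Set.Icc 0 1))
    (hinj : Set.InjOn f (Set.Icc 0 1)) {t : ℝ} (ht : t ∈ Set.Ioo (0:ℝ) 1)
    {C : Set α} (hC : IsPreconnected C) (hCA : C ⊆ f '' Set.Icc 0 1)
    (hCt : f t ∉ C) (h0 : f 0 ∈ C) (h1 : f 1 ∈ C) : False := by
  obtain ⟨ht0, ht1⟩ := ht
  have hsub1 : Set.Icc 0 t ⊆ Set.Icc (0:ℝ) 1 := Set.Icc_subset_Icc le_rfl ht1.le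
  have hsub2 : Set.Icc t 1 ⊆ Set.Icc (0:ℝ) 1 := Set.Icc_subset_Icc ht0.le le_rfl
  have hK1 : IsCompact (f '' Set.Icc 0 t) :=
    isCompact_Icc.image_of_continuousOn (hf.mono hsub1)
  have hK2 : IsCompact (f '' Set.Icc t 1) :=
    isCompact_Icc.image_of_continuousOn (hf.mono hsub2)
  have hu : IsOpen (f '' Set.Icc t 1)ᶜ := hK2.isClosed.isOpen_compl
  have hv : IsOpen (f '' Set.Icc 0 t)ᶜ := hK1.isClosed.isOpen_compl
  have hcov : C ⊆ (f '' Set.Icc t 1)ᶜ ∪ (f '' Set.Icc 0 t)ᶜ := by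
    intro x hx
    obtain ⟨s, hs, rfl⟩ := hCA hx
    have hst : s ≠ t := by rintro rfl; exact hCt hx
    rcases lt_or_ge s t with h | h
    · left
      rintro ⟨s', hs', he⟩
      have := hinj (hsub2 hs') hs he
      have := hs'.1
      linarith
    · right
      rintro ⟨s', hs', he⟩
      have := hinj (hsub1 hs') hs he
      have := hs'.2
      rcases h.lt_or_eq with h' | h'
      · linarith
      · exact hst h'.symm
  have hmem0 : f 0 ∈ (f '' Set.Icc t 1)ᶜ := by
    rintro ⟨s', hs', he⟩
    have := hinj (hsub2 hs') (Set.left_mem_Icc.2 zero_le_one) he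
    have := hs'.1
    linarith
  have hmem1 : f 1 ∈ (f '' Set.Icc 0 t)ᶜ := by
    rintro ⟨s', hs', he⟩
    have := hinj (hsub1 hs') (Set.right_mem_Icc.2 zero_le_one) he
    have := hs'.2
    linarith
  obtain ⟨x, hxC, hx2, hx1⟩ :=
    hC _ _ hu hv hcov ⟨f 0, h0, hmem0⟩ ⟨f 1, h1, hmem1⟩
  obtain ⟨s, hs, rfl⟩ := hCA hxC
  rcases le_or_gt s t with h | h
  · exact hx1 ⟨s, ⟨hs.1, h⟩, rfl⟩
  · exact hx2 ⟨s, ⟨h.le, hs.2⟩, rfl⟩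

/-- A subarc of an arc is an arc with the corresponding endpoints. -/
lemma isArc_image_Icc {f : ℝ → α} (hf : ContinuousOn f (Set.Icc 0 1))
    (hinj : Set.InjOn f (Set.Icc 0 1)) {a b : ℝ} (ha : 0 ≤ a) (hab : a < b) (hb : b ≤ 1) :
    IsArcWithEndpoints (f '' Set.Icc a b) (f a) (f b) := by
  have hba : (0:ℝ) < b - a := sub_pos.2 hab
  set φ : ℝ → ℝ := fun s => (b - a) * s + a with hφ
  have hφim : φ '' Set.Icc 0 1 = Set.Icc a b := by
    rw [hφ, Set.image_affine_Icc' hba]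
    norm_num
  have hφmaps : ∀ s ∈ Set.Icc (0:ℝ) 1, φ s ∈ Set.Icc (0:ℝ) 1 := by
    intro s hs
    have : φ s ∈ Set.Icc a b := hφim ▸ Set.mem_image_of_mem φ hs
    exact ⟨le_trans ha this.1, le_trans this.2 hb⟩
  refine ⟨fun s => f (φ s), ?_, ?_, ?_, ?_, ?_⟩
  · exact hf.comp ((continuous_const.mul continuous_id).add continuous_const).continuousOn
      hφmaps
  · intro s hs s' hs' he
    have h2 := hinj (hφmaps s hs) (hφmaps s' hs') he
    simp only [hφ] at h2
    exact mul_left_cancel₀ (ne_of_gt hba) (by linarith)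
  · rw [show (fun s => f (φ s)) = f ∘ φ from rfl, Set.image_comp, hφim]
  · simp [hφ]
  · simp [hφ]

/-- An interior point of an arc is never an endpoint of that arc. -/
lemma not_endpoint_of_interior {f : ℝ → α} (hf : ContinuousOn f (Set.Icc 0 1))
    (hinj : Set.InjOn f (Set.Icc 0 1)) {t : ℝ} (ht : t ∈ Set.Ioo (0:ℝ) 1) :
    ¬ ∃ b, IsArcWithEndpoints (f '' Set.Icc 0 1) (f t) b := by
  rintro ⟨b, h, hc, hi, him, hh0, hh1⟩
  have h01 : (0:ℝ) ∈ Set.Icc (0:ℝ) 1 := Set.left_mem_Icc.2 zero_le_one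
  have h11 : (1:ℝ) ∈ Set.Icc (0:ℝ) 1 := Set.right_mem_Icc.2 zero_le_one
  have htm : t ∈ Set.Icc (0:ℝ) 1 := Set.mem_Icc_of_Ioo ht
  have hCpre : IsPreconnected (h '' Set.Ioc 0 1) :=
    isPreconnected_Ioc.image h (hc.mono Set.Ioc_subset_Icc_self)
  have hCA : h '' Set.Ioc 0 1 ⊆ f '' Set.Icc 0 1 := by
    rw [← him]; exact Set.image_mono (f := h) Set.Ioc_subset_Icc_self
  have hCt : f t ∉ h '' Set.Ioc 0 1 := by
    rintro ⟨s, hs, he⟩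
    have : s = 0 := hi (Set.Ioc_subset_Icc_self hs) h01 (he.trans hh0.symm)
    exact absurd this (ne_of_gt hs.1)
  have hmem : ∀ u ∈ Set.Icc (0:ℝ) 1, u ≠ t → f u ∈ h '' Set.Ioc 0 1 := by
    intro u hu hut
    have : f u ∈ h '' Set.Icc 0 1 := him ▸ Set.mem_image_of_mem f hu
    obtain ⟨s, hs, he⟩ := this
    refine ⟨s, ⟨?_, hs.2⟩, he⟩
    rcases hs.1.lt_or_eq with h' | h'
    · exact h'
    · exfalso
      apply hut
      apply hinj hu htm
      rw [← he, ← h', hh0]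
  exact arc_sep hf hinj ht hCpre hCA hCt
    (hmem 0 h01 (ne_of_lt ht.1)) (hmem 1 h11 (ne_of_gt ht.2))

/-- Reversal of an arc. -/
lemma isArcWithEndpoints_symm {A : Set α} {a b : α} (h : IsArcWithEndpoints A a b) :
    IsArcWithEndpoints A b a := by
  obtain ⟨f, hc, hi, him, h0, h1⟩ := h
  have hmaps : ∀ s ∈ Set.Icc (0:ℝ) 1, 1 - s ∈ Set.Icc (0:ℝ) 1 := by
    intro s hs; exact ⟨by linarith [hs.2], by linarith [hs.1]⟩
  refine ⟨fun s => f (1 - s), ?_, ?_, ?_, by simpa using h1, by simpa using h0⟩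
  · exact hc.comp (continuous_const.sub continuous_id).continuousOn hmaps
  · intro s hs s' hs' he
    have := hi (hmaps s hs) (hmaps s' hs') he
    linarith
  · rw [show (fun s => f (1 - s)) = f ∘ (fun s => (1:ℝ) - s) from rfl, Set.image_comp,
      Set.image_const_sub_Icc]
    norm_num [him]

/-- If an arc's endpoints lie in `B` and the intersection with `B` is preconnected,
the whole arc lies in `B`. -/
lemma arc_subset_of_preconnected_inter {f : ℝ → α} (hf : ContinuousOn f (Set.Icc 0 1))
    (hinj : Set.InjOn f (Set.Icc 0 1)) {B : Set α}
    (hpre : IsPreconnected (f '' Set.Icc 0 1 ∩ B)) (hp : f 0 ∈ B) (hq : f 1 ∈ B) :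
    f '' Set.Icc 0 1 ⊆ B := by
  rintro x ⟨t, ht, rfl⟩
  by_contra hxB
  have ht0 : t ≠ 0 := by rintro rfl; exact hxB hp
  have ht1 : t ≠ 1 := by rintro rfl; exact hxB hq
  have ht' : t ∈ Set.Ioo (0:ℝ) 1 := ⟨ht.1.lt_of_ne (Ne.symm ht0), ht.2.lt_of_ne ht1⟩
  exact arc_sep hf hinj ht' hpre Set.inter_subset_left
    (fun h => hxB h.2)
    ⟨Set.mem_image_of_mem f (Set.left_mem_Icc.2 zero_le_one), hp⟩
    ⟨Set.mem_image_of_mem f (Set.right_mem_Icc.2 zero_le_one), hq⟩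

/-- Uniqueness of arcs between two points in a hereditarily unicoherent set. -/
lemma arc_unique {X : Set α} (huni : HereditarilyUnicoherent X) {A B : Set α} {p q : α}
    (hA : A ⊆ X) (hB : B ⊆ X) (hAe : IsArcWithEndpoints A p q)
    (hBe : IsArcWithEndpoints B p q) : A = B := by
  obtain ⟨f, hfc, hfi, hfim, hf0, hf1⟩ := hAe
  obtain ⟨g, hgc, hgi, hgim, hg0, hg1⟩ := hBe
  have h01 : (0:ℝ) ∈ Set.Icc (0:ℝ) 1 := Set.left_mem_Icc.2 zero_le_one
  have h11 : (1:ℝ) ∈ Set.Icc (0:ℝ) 1 := Set.right_mem_Icc.2 zero_le_one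
  have hAc : IsCompact A := hfim ▸ isCompact_Icc.image_of_continuousOn hfc
  have hBc : IsCompact B := hgim ▸ isCompact_Icc.image_of_continuousOn hgc
  have hAconn : IsConnected A := by
    rw [← hfim]
    exact ⟨⟨f 0, Set.mem_image_of_mem f h01⟩, isPreconnected_Icc.image f hfc⟩
  have hBconn : IsConnected B := by
    rw [← hgim]
    exact ⟨⟨g 0, Set.mem_image_of_mem g h01⟩, isPreconnected_Icc.image g hgc⟩
  have hpre : IsPreconnected (A ∩ B) := huni A B hA hB hAc hAconn hBc hBconn
  have hpA : p ∈ A := hf0 ▸ (hfim ▸ Set.mem_image_of_mem f h01)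
  have hqA : q ∈ A := hf1 ▸ (hfim ▸ Set.mem_image_of_mem f h11)
  have hpB : p ∈ B := hg0 ▸ (hgim ▸ Set.mem_image_of_mem g h01)
  have hqB : q ∈ B := hg1 ▸ (hgim ▸ Set.mem_image_of_mem g h11)
  apply Set.Subset.antisymm
  · have := arc_subset_of_preconnected_inter hfc hfi (B := A ∩ B)
      (by rw [hfim, Set.inter_eq_self_of_subset_right (Set.inter_subset_left : A ∩ B ⊆ A)]; exact hpre) ⟨hf0.symm ▸ hpA, hf0.symm ▸ hpB⟩ ⟨hf1.symm ▸ hqA, hf1.symm ▸ hqB⟩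
    rw [hfim] at this
    exact fun x hx => (this hx).2
  · have := arc_subset_of_preconnected_inter hgc hgi (B := A ∩ B)
      (by rw [hgim, Set.inter_eq_self_of_subset_right (Set.inter_subset_right : A ∩ B ⊆ B)]; exact hpre) ⟨hg0.symm ▸ hpA, hg0.symm ▸ hpB⟩ ⟨hg1.symm ▸ hqA, hg1.symm ▸ hqB⟩
    rw [hgim] at this
    exact fun x hx => (this hx).1

end AuxLemmas

/-- Proposition 1, (1) ⇒ (2), main step. -/
theorem stmt_7 {α : Type*} [MetricSpace α] (X : Set α) (hX : IsDendroid X)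
    (Q : Set α) (hQc : Q.Countable) (hQX : Q ⊆ X)
    (hQ : ∀ A : Set α, A ⊆ X → IsArc A → (Q ∩ A).Nonempty) :
    ∃ S : Set (Set α), S.Countable ∧ (∀ A ∈ S, IsArc A) ∧
      X \ Endpoints X = ⋃₀ S := by
  classical
  have h01 : (0:ℝ) ∈ Set.Icc (0:ℝ) 1 := Set.left_mem_Icc.2 zero_le_one
  have h11 : (1:ℝ) ∈ Set.Icc (0:ℝ) 1 := Set.right_mem_Icc.2 zero_le_one
  -- choose arcs between pairs of points of Q
  have hex : ∀ p q : α, ∃ gf : ℝ → α,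
      p ∈ Q → q ∈ Q → p ≠ q →
      ContinuousOn gf (Set.Icc 0 1) ∧ Set.InjOn gf (Set.Icc 0 1) ∧
      gf '' Set.Icc 0 1 ⊆ X ∧ gf 0 = p ∧ gf 1 = q := by
    intro p q
    by_cases h : p ∈ Q ∧ q ∈ Q ∧ p ≠ q
    · obtain ⟨A, hAX, f, hc, hi, him, hf0, hf1⟩ :=
        hX.2.2.2 p (hQX h.1) q (hQX h.2.1) h.2.2
      exact ⟨f, fun _ _ _ => ⟨hc, hi, him ▸ hAX, hf0, hf1⟩⟩
    · exact ⟨fun _ => p, fun h1 h2 h3 => absurd ⟨h1, h2, h3⟩ h⟩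
  choose g hg using hex
  set ε : ℕ → ℝ := fun n => 1 / (n + 3) with hεdef
  have hεpos : ∀ n : ℕ, 0 < ε n := fun n => by positivity
  have hεhalf : ∀ n : ℕ, ε n < 1 - ε n := by
    intro n
    have h3 : (2:ℝ) < (n:ℝ) + 3 := by
      have := Nat.cast_nonneg (α := ℝ) n; linarith
    have : ε n < 1 / 2 := by
      rw [hεdef]
      exact one_div_lt_one_div_of_lt two_pos h3
    linarith
  have hεle1 : ∀ n : ℕ, 1 - ε n ≤ 1 := fun n => by linarith [hεpos n]
  set S : Set (Set α) :=
    (fun z : (α × α) × ℕ => g z.1.1 z.1.2 '' Set.Icc (ε z.2) (1 - ε z.2)) ''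
      {z | z.1.1 ∈ Q ∧ z.1.2 ∈ Q ∧ z.1.1 ≠ z.1.2} with hSdef
  refine ⟨S, ?_, ?_, ?_⟩
  · -- countability
    apply Set.Countable.image
    have hsub : {z : (α × α) × ℕ | z.1.1 ∈ Q ∧ z.1.2 ∈ Q ∧ z.1.1 ≠ z.1.2} ⊆
        (Q ×ˢ Q) ×ˢ (Set.univ : Set ℕ) := fun z hz => ⟨⟨hz.1, hz.2.1⟩, trivial⟩
    exact Set.Countable.mono hsub ((hQc.prod hQc).prod Set.countable_univ)
  · -- every member is an arc
    rintro A ⟨⟨⟨p, q⟩, n⟩, ⟨hp, hq, hpq⟩, rfl⟩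
    obtain ⟨hc, hi, _, _, _⟩ := hg p q hp hq hpq
    exact ⟨_, _, isArc_image_Icc hc hi (hεpos n).le (hεhalf n) (hεle1 n)⟩
  · -- the equality
    ext x
    constructor
    · rintro ⟨hxX, hxE⟩
      -- x is not an endpoint: get an arc where x is interior
      rw [Endpoints, Set.mem_setOf_eq] at hxE
      push_neg at hxE
      obtain ⟨A, hAX, hAarc, hxA, hno⟩ := hxE hxX
      obtain ⟨a0, b0, f, hc, hi, him, hfa, hfb⟩ := hAarc
      rw [← him] at hxA
      obtain ⟨t, htm, rfl⟩ := hxA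
      have ht0 : t ≠ 0 := by
        rintro rfl
        exact hno (f 1) ⟨f, hc, hi, him, rfl, rfl⟩
      have ht1 : t ≠ 1 := by
        rintro rfl
        have := isArcWithEndpoints_symm (A := f '' Set.Icc 0 1) (a := f 0) (b := f 1)
          ⟨f, hc, hi, rfl, rfl, rfl⟩
        rw [him] at this
        exact hno (f 0) this
      have ht : t ∈ Set.Ioo (0:ℝ) 1 := ⟨htm.1.lt_of_ne (Ne.symm ht0), htm.2.lt_of_ne ht1⟩
      -- find points of Q on each side of x
      have hA1 : IsArcWithEndpoints (f '' Set.Icc 0 (t/2)) (f 0) (f (t/2)) :=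
        isArc_image_Icc hc hi le_rfl (half_pos ht.1) (by linarith [ht.2])
      have hA1X : f '' Set.Icc 0 (t/2) ⊆ X := by
        have hsub : Set.Icc 0 (t/2) ⊆ Set.Icc (0:ℝ) 1 :=
          Set.Icc_subset_Icc le_rfl (by linarith [ht.2])
        exact Set.Subset.trans (Set.image_mono (f := f) hsub) (by rw [him]; exact hAX)
      obtain ⟨q1, hq1Q, hq1A⟩ := hQ _ hA1X ⟨_, _, hA1⟩
      obtain ⟨s1, hs1, hfs1⟩ := hq1A
      have hA2 : IsArcWithEndpoints (f '' Set.Icc ((t+1)/2) 1) (f ((t+1)/2)) (f 1) :=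
        isArc_image_Icc hc hi (by linarith [ht.1]) (by linarith [ht.2]) le_rfl
      have hA2X : f '' Set.Icc ((t+1)/2) 1 ⊆ X := by
        have hsub : Set.Icc ((t+1)/2) 1 ⊆ Set.Icc (0:ℝ) 1 :=
          Set.Icc_subset_Icc (by linarith [ht.1]) le_rfl
        exact Set.Subset.trans (Set.image_mono (f := f) hsub) (by rw [him]; exact hAX)
      obtain ⟨q2, hq2Q, hq2A⟩ := hQ _ hA2X ⟨_, _, hA2⟩
      obtain ⟨s2, hs2, hfs2⟩ := hq2A
      have hs1m : s1 ∈ Set.Icc (0:ℝ) 1 := ⟨hs1.1, by linarith [hs1.2, ht.2]⟩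
      have hs2m : s2 ∈ Set.Icc (0:ℝ) 1 := ⟨by linarith [hs2.1, ht.1], hs2.2⟩
      have hs1t : s1 < t := by linarith [hs1.2, ht.1]
      have hts2 : t < s2 := by linarith [hs2.1, ht.2]
      have hs12 : s1 < s2 := hs1t.trans hts2
      have hq12 : q1 ≠ q2 := by
        rw [← hfs1, ← hfs2]
        intro h
        exact absurd (hi hs1m hs2m h) (ne_of_lt hs12)
      -- the canonical arc between q1 and q2 equals the subarc of f
      have hB : IsArcWithEndpoints (f '' Set.Icc s1 s2) q1 q2 := by
        rw [← hfs1, ← hfs2]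
        exact isArc_image_Icc hc hi hs1m.1 hs12 hs2m.2
      have hBX : f '' Set.Icc s1 s2 ⊆ X := by
        have hsub : Set.Icc s1 s2 ⊆ Set.Icc (0:ℝ) 1 := Set.Icc_subset_Icc hs1m.1 hs2m.2
        exact Set.Subset.trans (Set.image_mono (f := f) hsub) (by rw [him]; exact hAX)
      obtain ⟨hgc, hgi, hgX, hg0, hg1⟩ := hg q1 q2 hq1Q hq2Q hq12
      have hGarc : IsArcWithEndpoints (g q1 q2 '' Set.Icc 0 1) q1 q2 :=
        ⟨g q1 q2, hgc, hgi, rfl, hg0, hg1⟩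
      have hGB : g q1 q2 '' Set.Icc 0 1 = f '' Set.Icc s1 s2 :=
        arc_unique hX.2.2.1 hgX hBX hGarc hB
      have hxB : f t ∈ g q1 q2 '' Set.Icc 0 1 := by
        rw [hGB]; exact ⟨t, ⟨hs1t.le, hts2.le⟩, rfl⟩
      obtain ⟨u, hu, hfu⟩ := hxB
      have hu0 : u ≠ 0 := by
        rintro rfl
        rw [hg0, ← hfs1] at hfu
        exact absurd (hi hs1m (Set.mem_Icc_of_Ioo ht) hfu) (ne_of_lt hs1t)
      have hu1 : u ≠ 1 := by
        rintro rfl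
        rw [hg1, ← hfs2] at hfu
        exact absurd (hi hs2m (Set.mem_Icc_of_Ioo ht) hfu) (ne_of_gt hts2)
      have huI : u ∈ Set.Ioo (0:ℝ) 1 := ⟨hu.1.lt_of_ne (Ne.symm hu0), hu.2.lt_of_ne hu1⟩
      have hm : 0 < min u (1 - u) := lt_min huI.1 (by linarith [huI.2])
      obtain ⟨n, hn⟩ := exists_nat_one_div_lt hm
      have hεn : ε n < min u (1 - u) := by
        refine lt_of_le_of_lt ?_ hn
        rw [hεdef]
        apply one_div_le_one_div_of_le
        · positivity
        · have := Nat.cast_nonneg (α := ℝ) n; linarith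
      refine ⟨g q1 q2 '' Set.Icc (ε n) (1 - ε n), ⟨⟨⟨q1, q2⟩, n⟩, ⟨hq1Q, hq2Q, hq12⟩, rfl⟩, ?_⟩
      exact ⟨u, ⟨(le_min_iff.1 hεn.le).1, by linarith [(le_min_iff.1 hεn.le).2]⟩, hfu⟩
    · rintro ⟨A, ⟨⟨⟨p, q⟩, n⟩, ⟨hp, hq, hpq⟩, rfl⟩, hxA⟩
      obtain ⟨hgc, hgi, hgX, hg0, hg1⟩ := hg p q hp hq hpq
      obtain ⟨u, hu, rfl⟩ := hxA
      have huI : u ∈ Set.Ioo (0:ℝ) 1 :=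
        ⟨lt_of_lt_of_le (hεpos n) hu.1, lt_of_le_of_lt hu.2 (by linarith [hεpos n])⟩
      have huM : u ∈ Set.Icc (0:ℝ) 1 := Set.mem_Icc_of_Ioo huI
      refine ⟨hgX (Set.mem_image_of_mem _ huM), ?_⟩
      intro hE
      exact not_endpoint_of_interior hgc hgi huI
        (hE.2 (g p q '' Set.Icc 0 1) hgX ⟨p, q, g p q, hgc, hgi, rfl, hg0, hg1⟩
          (Set.mem_image_of_mem _ huM))
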